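/- Let T(z) be a formal power series with T(0)=0 satisfying T'(z) = φ(T(z)) + T(z) for a formal power series φ, and let T̃(z) be a formal power series with T̃(0)=0 satisfying T̃'(z) = φ(T̃(z)) + T̃(z). Then T(z) = T̃(z); in particular, the number T_m of free multilabelled increasing trees with m labels and degree-weight series φ equals the number of (unilabelled) increasing trees of size m with degree-weight series φ̃(t) = φ(t) + t. -/

import Mathlib

/-- Composition `φ(T)` of formal power series, valid when `T` has zero
constant coefficient. -/
noncomputable def psComp (φ T : PowerSeries ℝ) : PowerSeries ℝ :=
  PowerSeries.mk fun n =>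
    ∑ j ∈ Finset.range (n + 1), (PowerSeries.coeff j φ) * PowerSeries.coeff n (T ^ j)

private lemma pow_coeff_agree (T T' : PowerSeries ℝ) (n : ℕ)
    (h : ∀ k ≤ n, PowerSeries.coeff k T = PowerSeries.coeff k T') (j : ℕ) :
    ∀ k ≤ n, PowerSeries.coeff k (T ^ j) = PowerSeries.coeff k (T' ^ j) := by
  induction j with
  | zero => intro k _; simp
  | succ j ih =>
    intro k hk
    rw [pow_succ, pow_succ, PowerSeries.coeff_mul, PowerSeries.coeff_mul]
    refine Finset.sum_congr rfl fun p hp => ?_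
    rw [Finset.HasAntidiagonal.mem_antidiagonal] at hp
    rw [ih p.1 (le_trans (by omega) hk), h p.2 (le_trans (by omega) hk)]

/-- Uniqueness for the ODE of free multilabelled increasing trees: if `T` and
`T̃` are formal power series with zero constant coefficient both satisfying
`Y' = φ(Y) + Y`, then `T = T̃`.  (In particular, the EGF of free multilabelled
increasing trees with degree-weight series `φ` coincides with the EGF of
unilabelled increasing trees with degree-weight series `φ̃(t) = φ(t) + t`,
since the latter satisfies `T̃' = φ̃(T̃) = φ(T̃) + T̃`.) -/
theorem free_multilabelled_eq_unilabelled
    (φ T T' : PowerSeries ℝ)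
    (hT0 : PowerSeries.constantCoeff T = 0)
    (hT : PowerSeries.derivative ℝ T = psComp φ T + T)
    (hT'0 : PowerSeries.constantCoeff T' = 0)
    (hT' : PowerSeries.derivative ℝ T' = psComp φ T' + T') :
    T = T' := by
  ext n
  induction n using Nat.strong_induction_on with
  | _ n ih =>
    match n with
    | 0 => simpa [PowerSeries.coeff_zero_eq_constantCoeff] using hT0.trans hT'0.symm
    | n + 1 =>
      have h : ∀ k ≤ n, PowerSeries.coeff k T = PowerSeries.coeff k T' :=
        fun k hk => ih k (by omega)
      have hd : PowerSeries.coeff n (PowerSeries.derivative ℝ T)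
          = PowerSeries.coeff n (PowerSeries.derivative ℝ T') := by
        rw [hT, hT', map_add, map_add, h n le_rfl]
        congr 1
        simp only [psComp, PowerSeries.coeff_mk]
        exact Finset.sum_congr rfl fun j _ => by
          rw [pow_coeff_agree T T' n h j n le_rfl]
      rw [PowerSeries.coeff_derivative, PowerSeries.coeff_derivative] at hd
      have : ((n : ℝ) + 1) ≠ 0 := by positivity
      field_simp at hd
      tauto
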